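/- Let P₁ and P₂ be probability measures on a measurable space 𝒳 with total variation distance V. Then for every convex function f:[0,∞)→ℝ with f(1)=0, inf_Q ( D_f(P₁||Q) + D_f(P₂||Q) ) ≥ f(1+V) + f(1−V), where the infimum is over all probability measures Q on 𝒳. -/

import Mathlib

open MeasureTheory Real

/-- The `f`-divergence `D_f(P‖Q) = ∫ f(dP/dQ) dQ` (real-valued; meaningful when `P ≪ Q`
and the integrand is integrable, in which case it agrees with the usual definition;
otherwise the usual `D_f` is `+∞` and the lower bound is trivially true). -/
noncomputable def fDivR {X : Type*} [MeasurableSpace X] (f : ℝ → ℝ) (P Q : Measure X) : ℝ :=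
  ∫ x, f ((P.rnDeriv Q x).toReal) ∂Q

/-- A convex function on `[0, ∞)` has a supporting line at every interior point. -/
lemma exists_support_line {f : ℝ → ℝ} (hf : ConvexOn ℝ (Set.Ici 0) f) {c : ℝ} (hc : 0 < c) :
    ∃ k : ℝ, ∀ t, 0 ≤ t → f c + k * (t - c) ≤ f t := by
  set S : Set ℝ := (fun u => (f c - f u) / (c - u)) '' Set.Ico 0 c with hS
  have hne : S.Nonempty := ⟨_, ⟨0, ⟨le_refl 0, hc⟩, rfl⟩⟩
  have hmem : ∀ u, 0 ≤ u → u < c → (f c - f u) / (c - u) ∈ S :=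
    fun u h0 h1 => ⟨u, ⟨h0, h1⟩, rfl⟩
  have hbdd : BddAbove S := by
    refine ⟨(f (c + 1) - f c) / (c + 1 - c), ?_⟩
    rintro x ⟨u, ⟨hu0, huc⟩, rfl⟩
    exact hf.slope_mono_adjacent hu0 (by positivity : (0:ℝ) ≤ c + 1) huc (by linarith)
  refine ⟨sSup S, fun t ht => ?_⟩
  rcases lt_trichotomy t c with h | h | h
  · have h1 : (f c - f t) / (c - t) ≤ sSup S := le_csSup hbdd (hmem t ht h)
    have h2 : f c - f t ≤ sSup S * (c - t) := (div_le_iff₀ (by linarith)).mp h1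
    nlinarith [h2]
  · simp [h]
  · have h1 : sSup S ≤ (f t - f c) / (t - c) := by
      refine csSup_le hne ?_
      rintro x ⟨u, ⟨hu0, huc⟩, rfl⟩
      exact hf.slope_mono_adjacent hu0 (le_trans hc.le h.le) huc h
    have h2 : sSup S * (t - c) ≤ f t - f c := (le_div_iff₀ (by linarith)).mp h1
    linarith


/-- Corollary 2: for probability measures `P₁, P₂` with total variation
distance `V` and any convex `f` with `f 1 = 0`,
`inf_Q (D_f(P₁‖Q) + D_f(P₂‖Q)) ≥ f(1+V) + f(1-V)`; the infimum over `Q` is expressed by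
universally quantifying over probability measures `Q` (the excluded `Q`'s give `D_f = +∞`). -/
theorem statement3 {X : Type*} [MeasurableSpace X] (μ : Measure X) [SigmaFinite μ]
    (p₁ p₂ : X → ℝ) (h₁m : Measurable p₁) (h₂m : Measurable p₂)
    (h₁0 : ∀ x, 0 ≤ p₁ x) (h₂0 : ∀ x, 0 ≤ p₂ x)
    (P₁ P₂ : Measure X)
    (hP₁ : P₁ = μ.withDensity fun x => ENNReal.ofReal (p₁ x))
    (hP₂ : P₂ = μ.withDensity fun x => ENNReal.ofReal (p₂ x))
    [IsProbabilityMeasure P₁] [IsProbabilityMeasure P₂]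
    (V : ℝ) (hV : V = 2⁻¹ * ∫ x, |p₁ x - p₂ x| ∂μ)
    (f : ℝ → ℝ) (hf : ConvexOn ℝ (Set.Ici 0) f) (hf1 : f 1 = 0)
    (Q : Measure X) [IsProbabilityMeasure Q] (h₁Q : P₁ ≪ Q) (h₂Q : P₂ ≪ Q)
    (hi₁ : Integrable (fun x => f (P₁.rnDeriv Q x).toReal) Q)
    (hi₂ : Integrable (fun x => f (P₂.rnDeriv Q x).toReal) Q) :
    f (1 + V) + f (1 - V) ≤ fDivR f P₁ Q + fDivR f P₂ Q := by
  classical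
  set g₁ : X → ℝ := fun x => (P₁.rnDeriv Q x).toReal with hg₁def
  set g₂ : X → ℝ := fun x => (P₂.rnDeriv Q x).toReal with hg₂def
  have hg₁0 : ∀ x, 0 ≤ g₁ x := fun x => ENNReal.toReal_nonneg
  have hg₂0 : ∀ x, 0 ≤ g₂ x := fun x => ENNReal.toReal_nonneg
  have hg₁i : Integrable g₁ Q := Measure.integrable_toReal_rnDeriv
  have hg₂i : Integrable g₂ Q := Measure.integrable_toReal_rnDeriv
  -- integrability of p₁, p₂ w.r.t. μ
  have hl₁ : ∫⁻ x, ENNReal.ofReal (p₁ x) ∂μ = 1 := by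
    rw [← setLIntegral_univ, ← withDensity_apply _ MeasurableSet.univ, ← hP₁]
    exact measure_univ
  have hl₂ : ∫⁻ x, ENNReal.ofReal (p₂ x) ∂μ = 1 := by
    rw [← setLIntegral_univ, ← withDensity_apply _ MeasurableSet.univ, ← hP₂]
    exact measure_univ
  have h₁i : Integrable p₁ μ := by
    have := integrable_toReal_of_lintegral_ne_top
      (ENNReal.measurable_ofReal.comp h₁m).aemeasurable (hl₁ ▸ ENNReal.one_ne_top)
    refine this.congr (Filter.Eventually.of_forall fun x => ?_)
    exact ENNReal.toReal_ofReal (h₁0 x)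
  have h₂i : Integrable p₂ μ := by
    have := integrable_toReal_of_lintegral_ne_top
      (ENNReal.measurable_ofReal.comp h₂m).aemeasurable (hl₂ ▸ ENNReal.one_ne_top)
    refine this.congr (Filter.Eventually.of_forall fun x => ?_)
    exact ENNReal.toReal_ofReal (h₂0 x)
  have hint₁ : ∫ x, p₁ x ∂μ = 1 := by
    have := ofReal_integral_eq_lintegral_ofReal h₁i (Filter.Eventually.of_forall h₁0)
    rw [hl₁] at this
    have h0 : 0 ≤ ∫ x, p₁ x ∂μ := integral_nonneg h₁0
    have := congrArg ENNReal.toReal this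
    rwa [ENNReal.toReal_ofReal h0, ENNReal.toReal_one] at this
  have hint₂ : ∫ x, p₂ x ∂μ = 1 := by
    have := ofReal_integral_eq_lintegral_ofReal h₂i (Filter.Eventually.of_forall h₂0)
    rw [hl₂] at this
    have h0 : 0 ≤ ∫ x, p₂ x ∂μ := integral_nonneg h₂0
    have := congrArg ENNReal.toReal this
    rwa [ENNReal.toReal_ofReal h0, ENNReal.toReal_one] at this
  -- the set A and its measures
  set A : Set X := {x | p₂ x ≤ p₁ x} with hAdef
  have hA : MeasurableSet A := measurableSet_le h₂m h₁m
  have key₁ : ∀ s : Set X, MeasurableSet s → (P₁ s).toReal = ∫ x in s, p₁ x ∂μ := by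
    intro s hs
    rw [hP₁, withDensity_apply _ hs,
      ← ofReal_integral_eq_lintegral_ofReal h₁i.restrict
        (Filter.Eventually.of_forall h₁0),
      ENNReal.toReal_ofReal (setIntegral_nonneg hs fun x _ => h₁0 x)]
  have key₂ : ∀ s : Set X, MeasurableSet s → (P₂ s).toReal = ∫ x in s, p₂ x ∂μ := by
    intro s hs
    rw [hP₂, withDensity_apply _ hs,
      ← ofReal_integral_eq_lintegral_ofReal h₂i.restrict
        (Filter.Eventually.of_forall h₂0),
      ENNReal.toReal_ofReal (setIntegral_nonneg hs fun x _ => h₂0 x)]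
  set a : ℝ := (P₁ A).toReal with hadef
  set b : ℝ := (P₂ A).toReal with hbdef
  set a' : ℝ := (P₁ Aᶜ).toReal with ha'def
  set b' : ℝ := (P₂ Aᶜ).toReal with hb'def
  have haa' : a + a' = 1 := by
    rw [hadef, ha'def, ← ENNReal.toReal_add (measure_ne_top _ _) (measure_ne_top _ _),
      measure_add_measure_compl hA, measure_univ, ENNReal.toReal_one]
  have hbb' : b + b' = 1 := by
    rw [hbdef, hb'def, ← ENNReal.toReal_add (measure_ne_top _ _) (measure_ne_top _ _),
      measure_add_measure_compl hA, measure_univ, ENNReal.toReal_one]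
  have ha01 : 0 ≤ a ∧ a ≤ 1 := by
    constructor
    · exact ENNReal.toReal_nonneg
    · have : a' = (P₁ Aᶜ).toReal := rfl
      have h0 : 0 ≤ a' := ENNReal.toReal_nonneg
      linarith
  have hb01 : 0 ≤ b ∧ b ≤ 1 := by
    constructor
    · exact ENNReal.toReal_nonneg
    · have h0 : 0 ≤ b' := ENNReal.toReal_nonneg
      linarith
  -- V = a - b
  have hVab : V = a - b := by
    have e₁ : ∫ x in A, |p₁ x - p₂ x| ∂μ = ∫ x in A, (p₁ x - p₂ x) ∂μ := by
      refine setIntegral_congr_fun hA fun x hx => ?_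
      exact abs_of_nonneg (by simpa [hAdef, sub_nonneg] using hx)
    have e₂ : ∫ x in Aᶜ, |p₁ x - p₂ x| ∂μ = ∫ x in Aᶜ, (p₂ x - p₁ x) ∂μ := by
      refine setIntegral_congr_fun hA.compl fun x hx => ?_
      rw [abs_sub_comm]
      simp only [hAdef, Set.mem_compl_iff, Set.mem_setOf_eq, not_le] at hx
      exact abs_of_nonneg (by linarith)
    have hd : Integrable (fun x => p₁ x - p₂ x) μ := h₁i.sub h₂i
    have hda : Integrable (fun x => |p₁ x - p₂ x|) μ := hd.abs
    have hsplit : ∫ x, |p₁ x - p₂ x| ∂μ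
        = ∫ x in A, (p₁ x - p₂ x) ∂μ + ∫ x in Aᶜ, (p₂ x - p₁ x) ∂μ := by
      rw [← e₁, ← e₂, integral_add_compl hA hda]
    have hzero : ∫ x in A, (p₁ x - p₂ x) ∂μ + ∫ x in Aᶜ, (p₁ x - p₂ x) ∂μ = 0 := by
      rw [integral_add_compl hA hd, integral_sub h₁i h₂i, hint₁, hint₂]
      ring
    have hcs : ∫ x in Aᶜ, (p₂ x - p₁ x) ∂μ = - ∫ x in Aᶜ, (p₁ x - p₂ x) ∂μ := by
      rw [← integral_neg]
      congr 1
      ext x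
      ring
    have hab : a - b = ∫ x in A, (p₁ x - p₂ x) ∂μ := by
      rw [hadef, hbdef, key₁ A hA, key₂ A hA, integral_sub h₁i.restrict h₂i.restrict]
    rw [hV, hsplit, hcs, hab]
    linarith [hzero]
  have hV0 : 0 ≤ V := by
    rw [hV]
    positivity
  have hV1 : V ≤ 1 := by rw [hVab]; linarith [ha01.2, hb01.1]
  -- set integrals of g₁, g₂
  have hsg₁ : ∀ s : Set X, MeasurableSet s → ∫ x in s, g₁ x ∂Q = (P₁ s).toReal := by
    intro s _; exact Measure.setIntegral_toReal_rnDeriv h₁Q s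
  have hsg₂ : ∀ s : Set X, MeasurableSet s → ∫ x in s, g₂ x ∂Q = (P₂ s).toReal := by
    intro s _; exact Measure.setIntegral_toReal_rnDeriv h₂Q s
  -- supporting line at 1 + V
  obtain ⟨k₁, hk₁⟩ := exists_support_line hf (show (0:ℝ) < 1 + V by linarith)
  -- "supporting line" at 1 - V (a.e. version to handle V = 1)
  obtain ⟨k₂, hk₂⟩ : ∃ k₂ : ℝ, ∀ᵐ x ∂Q,
      (x ∈ A → f (1 - V) + k₂ * (g₂ x - (1 - V)) ≤ f (g₂ x)) ∧
      (x ∉ A → f (1 - V) + k₂ * (g₁ x - (1 - V)) ≤ f (g₁ x)) := by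
    rcases lt_or_eq_of_le hV1 with h | h
    · obtain ⟨k₂, hk₂⟩ := exists_support_line hf (show (0:ℝ) < 1 - V by linarith)
      exact ⟨k₂, Filter.Eventually.of_forall fun x =>
        ⟨fun _ => hk₂ _ (hg₂0 x), fun _ => hk₂ _ (hg₁0 x)⟩⟩
    · -- V = 1 : P₂ A = 0 and P₁ Aᶜ = 0
      have hb0 : b = 0 := by linarith [hVab ▸ h.symm, hb01.1, ha01.2]
      have ha'0 : a' = 0 := by
        have ha1 : a = 1 := by linarith [hVab ▸ h.symm, hb01.1, ha01.2]
        linarith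
      have hP₂A : P₂ A = 0 :=
        (ENNReal.toReal_eq_zero_iff _).mp hb0 |>.resolve_right (measure_ne_top _ _)
      have hP₁Ac : P₁ Aᶜ = 0 :=
        (ENNReal.toReal_eq_zero_iff _).mp ha'0 |>.resolve_right (measure_ne_top _ _)
      have hg₂A : ∀ᵐ x ∂Q, x ∈ A → g₂ x = 0 := by
        have hli : ∫⁻ x in A, P₂.rnDeriv Q x ∂Q = 0 := by
          rw [Measure.setLIntegral_rnDeriv' h₂Q hA, hP₂A]
        have := (lintegral_eq_zero_iff (Measure.measurable_rnDeriv P₂ Q)).mp hli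
        have := (ae_restrict_iff' hA).mp this
        filter_upwards [this] with x hx hxA
        simp [hg₂def, hx hxA]
      have hg₁Ac : ∀ᵐ x ∂Q, x ∉ A → g₁ x = 0 := by
        have hli : ∫⁻ x in Aᶜ, P₁.rnDeriv Q x ∂Q = 0 := by
          rw [Measure.setLIntegral_rnDeriv' h₁Q hA.compl, hP₁Ac]
        have := (ae_restrict_iff' hA.compl).mp
          ((lintegral_eq_zero_iff (Measure.measurable_rnDeriv P₁ Q)).mp hli)
        filter_upwards [this] with x hx hxA
        simp [hg₁def, hx hxA]
      refine ⟨0, ?_⟩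
      filter_upwards [hg₂A, hg₁Ac] with x h2 h1
      constructor
      · intro hxA
        rw [h2 hxA, ← h]
        simp
      · intro hxA
        rw [h1 hxA, ← h]
        simp
  -- the piecewise affine lower bound
  set C : ℝ := f (1 + V) + f (1 - V) - k₁ * (1 + V) - k₂ * (1 - V) with hCdef
  set u : X → ℝ := fun x => C + k₁ * g₁ x + k₂ * g₂ x with hudef
  set v : X → ℝ := fun x => C + k₁ * g₂ x + k₂ * g₁ x with hvdef
  have hui : Integrable u Q := by
    exact ((integrable_const C).add (hg₁i.const_mul k₁)).add (hg₂i.const_mul k₂)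
  have hvi : Integrable v Q := by
    exact ((integrable_const C).add (hg₂i.const_mul k₁)).add (hg₁i.const_mul k₂)
  set l : X → ℝ := fun x => if x ∈ A then u x else v x with hldef
  have hleq : l = fun x => A.indicator u x + Aᶜ.indicator v x := by
    funext x
    by_cases hx : x ∈ A <;> simp [hldef, Set.indicator_apply, hx]
  have hli : Integrable l Q := by
    rw [hleq]
    exact (hui.indicator hA).add (hvi.indicator hA.compl)
  -- compute ∫ l
  have hQA : (Q A).toReal + (Q Aᶜ).toReal = 1 := by
    rw [← ENNReal.toReal_add (measure_ne_top _ _) (measure_ne_top _ _),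
      measure_add_measure_compl hA, measure_univ, ENNReal.toReal_one]
  have hintl : ∫ x, l x ∂Q = f (1 + V) + f (1 - V) := by
    rw [hleq, integral_add (hui.indicator hA) (hvi.indicator hA.compl),
      integral_indicator hA, integral_indicator hA.compl]
    have e₁ : ∫ x in A, u x ∂Q = C * (Q A).toReal + k₁ * a + k₂ * b := by
      have i1 : Integrable (fun x => C + k₁ * g₁ x) Q :=
        (integrable_const C).add (hg₁i.const_mul k₁)
      have i2 : Integrable (fun x => k₂ * g₂ x) Q := hg₂i.const_mul k₂
      have i3 : Integrable (fun x => k₁ * g₁ x) Q := hg₁i.const_mul k₁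
      rw [hudef]
      simp only
      rw [integral_add i1.restrict i2.restrict,
        integral_add (integrable_const C).restrict i3.restrict,
        integral_const, integral_const_mul, integral_const_mul, hsg₁ A hA, hsg₂ A hA]
      simp [mul_comm, hadef, hbdef, Measure.real]
    have e₂ : ∫ x in Aᶜ, v x ∂Q = C * (Q Aᶜ).toReal + k₁ * b' + k₂ * a' := by
      have i1 : Integrable (fun x => C + k₁ * g₂ x) Q :=
        (integrable_const C).add (hg₂i.const_mul k₁)
      have i2 : Integrable (fun x => k₂ * g₁ x) Q := hg₁i.const_mul k₂
      have i3 : Integrable (fun x => k₁ * g₂ x) Q := hg₂i.const_mul k₁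
      rw [hvdef]
      simp only
      rw [integral_add i1.restrict i2.restrict,
        integral_add (integrable_const C).restrict i3.restrict,
        integral_const, integral_const_mul, integral_const_mul, hsg₁ Aᶜ hA.compl,
        hsg₂ Aᶜ hA.compl]
      simp [mul_comm, ha'def, hb'def, Measure.real]
    rw [e₁, e₂]
    have hab' : a + b' = 1 + V := by rw [hVab]; linarith
    have hba' : b + a' = 1 - V := by rw [hVab]; linarith
    have : C * (Q A).toReal + C * (Q Aᶜ).toReal = C := by
      rw [← mul_add, hQA, mul_one]
    have h1 : k₁ * a + k₁ * b' = k₁ * (1 + V) := by rw [← mul_add, hab']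
    have h2 : k₂ * b + k₂ * a' = k₂ * (1 - V) := by rw [← mul_add, hba']
    linarith [this, h1, h2, hCdef]
  -- pointwise a.e. bound
  have hmono : ∀ᵐ x ∂Q, l x ≤ f (g₁ x) + f (g₂ x) := by
    filter_upwards [hk₂] with x hx
    by_cases hxA : x ∈ A
    · have h1 : f (1 + V) + k₁ * (g₁ x - (1 + V)) ≤ f (g₁ x) := hk₁ _ (hg₁0 x)
      have h2 := hx.1 hxA
      have hlx : l x = (f (1 + V) + k₁ * (g₁ x - (1 + V)))
          + (f (1 - V) + k₂ * (g₂ x - (1 - V))) := by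
        simp only [hldef, if_pos hxA, hudef, hCdef]
        ring
      rw [hlx]
      linarith
    · have h1 : f (1 + V) + k₁ * (g₂ x - (1 + V)) ≤ f (g₂ x) := hk₁ _ (hg₂0 x)
      have h2 := hx.2 hxA
      have hlx : l x = (f (1 + V) + k₁ * (g₂ x - (1 + V)))
          + (f (1 - V) + k₂ * (g₁ x - (1 - V))) := by
        simp only [hldef, if_neg hxA, hvdef, hCdef]
        ring
      rw [hlx]
      linarith
  calc f (1 + V) + f (1 - V) = ∫ x, l x ∂Q := hintl.symm
    _ ≤ ∫ x, (f (g₁ x) + f (g₂ x)) ∂Q := integral_mono_ae hli (hi₁.add hi₂) hmono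
    _ = fDivR f P₁ Q + fDivR f P₂ Q := integral_add hi₁ hi₂
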